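/- (Source-type inequality for finite rank operators, part 1) Let X, Y be Hilbert spaces, K : X → Y a bounded linear operator with finite dimensional range, R : X → [0,∞) Lipschitz continuous with constant L, and x‡ an R-minimizing solution of Kx = Kx‡. Let P be the orthogonal projection onto ker(K) and let a > 0 satisfy ‖Kz‖ ≥ a‖z‖ for all z ∈ ker(K)^⊥. Then for all x ∈ X: R(x‡) − R(x) ≤ (L/a)·‖Kx − Kx‡‖. -/

import Mathlib

open Filter Topology

theorem source_inequality_finite_rank_part1
    {X : Type*} [NormedAddCommGroup X] [InnerProductSpace ℝ X] [CompleteSpace X]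
    {Y : Type*} [NormedAddCommGroup Y] [InnerProductSpace ℝ Y] [CompleteSpace Y]
    (K : X →L[ℝ] Y)
    (hfin : FiniteDimensional ℝ (LinearMap.range K.toLinearMap))
    (R : X → ℝ) (hRnonneg : ∀ x, 0 ≤ R x)
    (L : ℝ) (hL : 0 ≤ L)
    (hLip : ∀ x x' : X, |R x - R x'| ≤ L * ‖x - x'‖)
    (xdag : X) (hmin : ∀ x : X, K x = K xdag → R xdag ≤ R x)
    (a : ℝ) (ha : 0 < a)
    (hlb : ∀ z : X, z ∈ (LinearMap.ker K.toLinearMap)ᗮ → a * ‖z‖ ≤ ‖K z‖) :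
    ∀ x : X, R xdag - R x ≤ (L / a) * ‖K x - K xdag‖ := by
  intro x
  set N := LinearMap.ker K.toLinearMap with hN
  haveI : CompleteSpace N := K.isClosed_ker.completeSpace_coe
  set P : X → X := fun v => (N.orthogonalProjection v : X) with hP
  set x0 : X := xdag - P xdag + P x with hx0
  have hPker : ∀ v : X, K (P v) = 0 := fun v =>
    (N.orthogonalProjection v).2
  have hKx0 : K x0 = K xdag := by
    simp [hx0, map_add, map_sub, hPker]
  have hdiff : x0 - x ∈ Nᗮ := by
    have h1 : xdag - P xdag ∈ Nᗮ := N.sub_starProjection_mem_orthogonal xdag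
    have h2 : x - P x ∈ Nᗮ := N.sub_starProjection_mem_orthogonal x
    have : x0 - x = (xdag - P xdag) - (x - P x) := by rw [hx0]; abel
    rw [this]
    exact Submodule.sub_mem _ h1 h2
  have hnorm : a * ‖x0 - x‖ ≤ ‖K x - K xdag‖ := by
    have := hlb _ hdiff
    have hK : K (x0 - x) = K xdag - K x := by rw [map_sub, hKx0]
    rw [hK] at this
    rw [show ‖K x - K xdag‖ = ‖K xdag - K x‖ from norm_sub_rev _ _]
    exact this
  have h1 : R xdag ≤ R x0 := hmin x0 hKx0
  have h2 : R x0 - R x ≤ L * ‖x0 - x‖ := (abs_le.mp (hLip x0 x)).2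
  have h3 : ‖x0 - x‖ ≤ ‖K x - K xdag‖ / a := by
    rw [le_div_iff₀ ha]; linarith [hnorm]
  calc R xdag - R x ≤ L * ‖x0 - x‖ := by linarith
    _ ≤ L * (‖K x - K xdag‖ / a) := by
        exact mul_le_mul_of_nonneg_left h3 hL
    _ = (L / a) * ‖K x - K xdag‖ := by ring
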